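/- The family S_t: F → F, t ≥ 0, defined by [S_t φ](θ) = x_φ(t+θ) if t+θ > 0 and [S_t φ](θ) = φ(t+θ) if t+θ ≤ 0 (where x_φ is the unique solution of the delay equation with initial function φ) is a strongly continuous semigroup of continuous linear operators on the Fréchet space F: S_0 = I, S_{t+s} = S_t S_s, each S_t is continuous (bounded with respect to the seminorms), and t ↦ S_t φ is continuous from [0,∞) to F for each φ ∈ F. -/

import Mathlib

open Filter Set

/-- sup_{s ∈ [0, kτ₁]} |b_i φ(s − τ_i)|  (τ₁ = τ 0 with ℕ-indexing). -/
noncomputable def pTerm (b τ : ℕ → ℝ) (φ : ℝ → ℝ) (k i : ℕ) : ℝ :=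
  ⨆ s : Set.Icc (0:ℝ) ((k : ℝ) * τ 0), |b i * φ ((s : ℝ) - τ i)|

/-- The seminorm p_k(φ) = Σ_{i ≥ n(k)} sup_{s ∈ [0,kτ₁]} |b_i φ(s − τ_i)|. -/
noncomputable def pSemi (b τ : ℕ → ℝ) (n : ℕ → ℕ) (φ : ℝ → ℝ) (k : ℕ) : ℝ :=
  ∑' i : ℕ, pTerm b τ φ k (n k + i)

/-- The seminorm ‖φ‖_k = sup_{θ ∈ [−k,0]} |φ(θ)|. -/
noncomputable def normSemi (φ : ℝ → ℝ) (k : ℕ) : ℝ :=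
  ⨆ θ : Set.Icc (-(k:ℝ)) (0:ℝ), |φ (θ : ℝ)|

/-- n(k) is the smallest natural number such that τ_i ≥ kτ₁ for all i ≥ n(k). -/
def nSpec (τ : ℕ → ℝ) (n : ℕ → ℕ) : Prop :=
  ∀ k : ℕ, (∀ i, n k ≤ i → (k : ℝ) * τ 0 ≤ τ i) ∧
    ∀ m : ℕ, (∀ i, m ≤ i → (k : ℝ) * τ 0 ≤ τ i) → n k ≤ m

/-- Membership in the Fréchet space F: φ is continuous on (-∞,0] and
p_k(φ) < ∞ (i.e. the defining series is summable) for every k. -/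
def memF (b τ : ℕ → ℝ) (n : ℕ → ℕ) (φ : ℝ → ℝ) : Prop :=
  ContinuousOn φ (Set.Iic 0) ∧
    ∀ k : ℕ, Summable fun i => pTerm b τ φ k (n k + i)

open Topology

/-- A solution of the infinite-delay equation with initial function φ. -/
def IsSolution (a : ℝ) (b τ : ℕ → ℝ) (φ x : ℝ → ℝ) : Prop :=
  Continuous x ∧ (∀ θ ≤ (0:ℝ), x θ = φ θ) ∧
  (∀ t ≥ (0:ℝ), Summable fun i => b i * x (t - τ i)) ∧
  (∀ t ≥ (0:ℝ), HasDerivWithinAt x (a * x t + ∑' i, b i * x (t - τ i)) (Set.Ici 0) t) ∧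
  ContinuousOn (fun t => a * x t + ∑' i, b i * x (t - τ i)) (Set.Ici 0)

/-- The solution semigroup: [S_t φ](θ) = x_φ(t+θ) for t+θ > 0 and φ(t+θ) for
t+θ ≤ 0; since the solution x_φ agrees with φ on (-∞,0], both cases are
x_φ(t+θ). -/
noncomputable def Sop (sol : (ℝ → ℝ) → ℝ → ℝ) (t : ℝ) (φ : ℝ → ℝ) : ℝ → ℝ :=
  fun θ => sol φ (t + θ)

/-! ### Auxiliary lemmas -/

section Aux
open Real

lemma bdd_restrict_abs {c d : ℝ} {f : ℝ → ℝ} (hf : ContinuousOn f (Icc c d)) :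
    BddAbove (Set.range fun s : Icc c d => |f (s:ℝ)|) := by
  have : (Set.range fun s : Icc c d => |f (s:ℝ)|) = (fun x => |f x|) '' (Icc c d) := by
    ext y; simp [Set.range, Set.mem_image]
  rw [this]
  exact (isCompact_Icc.image_of_continuousOn hf.abs).bddAbove

lemma pTerm_nonneg (b τ : ℕ → ℝ) (φ : ℝ → ℝ) (k i : ℕ) : 0 ≤ pTerm b τ φ k i :=
  Real.iSup_nonneg fun _ => abs_nonneg _

lemma normSemi_nonneg (φ : ℝ → ℝ) (k : ℕ) : 0 ≤ normSemi φ k :=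
  Real.iSup_nonneg fun _ => abs_nonneg _

lemma pSemi_nonneg (b τ : ℕ → ℝ) (n : ℕ → ℕ) (φ : ℝ → ℝ) (k : ℕ) :
    0 ≤ pSemi b τ n φ k :=
  tsum_nonneg fun _ => pTerm_nonneg _ _ _ _ _

lemma pTerm_le {b τ : ℕ → ℝ} {φ : ℝ → ℝ} {k i : ℕ} {c : ℝ} (hc : 0 ≤ c)
    (h : ∀ s ∈ Icc (0:ℝ) ((k:ℝ) * τ 0), |b i * φ (s - τ i)| ≤ c) :
    pTerm b τ φ k i ≤ c :=
  Real.iSup_le (fun s => h s s.2) hc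

lemma le_pTerm {b τ : ℕ → ℝ} {φ : ℝ → ℝ} {k i : ℕ} {s : ℝ}
    (hs : s ∈ Icc (0:ℝ) ((k:ℝ) * τ 0))
    (hbdd : BddAbove (Set.range fun s : Icc (0:ℝ) ((k:ℝ) * τ 0) => |b i * φ ((s:ℝ) - τ i)|)) :
    |b i * φ (s - τ i)| ≤ pTerm b τ φ k i :=
  le_ciSup hbdd (⟨s, hs⟩ : Icc (0:ℝ) ((k:ℝ) * τ 0))

lemma normSemi_le {φ : ℝ → ℝ} {k : ℕ} {c : ℝ} (hc : 0 ≤ c)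
    (h : ∀ θ ∈ Icc (-(k:ℝ)) (0:ℝ), |φ θ| ≤ c) : normSemi φ k ≤ c :=
  Real.iSup_le (fun θ => h θ θ.2) hc

lemma le_normSemi {φ : ℝ → ℝ} {k : ℕ} {θ : ℝ} (hθ : θ ∈ Icc (-(k:ℝ)) (0:ℝ))
    (hφ : ContinuousOn φ (Iic 0)) : |φ θ| ≤ normSemi φ k := by
  have hbdd : BddAbove (Set.range fun θ : Icc (-(k:ℝ)) (0:ℝ) => |φ (θ:ℝ)|) :=
    bdd_restrict_abs (hφ.mono (fun x hx => hx.2))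
  exact le_ciSup hbdd (⟨θ, hθ⟩ : Icc (-(k:ℝ)) (0:ℝ))

lemma pTerm_bdd_of_cont {b τ : ℕ → ℝ} {φ : ℝ → ℝ} (hφ : Continuous φ) (k i : ℕ) :
    BddAbove (Set.range fun s : Icc (0:ℝ) ((k:ℝ) * τ 0) => |b i * φ ((s:ℝ) - τ i)|) :=
  bdd_restrict_abs
    ((continuous_const.mul (hφ.comp (continuous_id.sub continuous_const))).continuousOn)

lemma pTerm_bdd_of_contOn {b τ : ℕ → ℝ} {φ : ℝ → ℝ} (hφ : ContinuousOn φ (Iic 0))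
    {k i : ℕ} (hi : (k:ℝ) * τ 0 ≤ τ i) :
    BddAbove (Set.range fun s : Icc (0:ℝ) ((k:ℝ) * τ 0) => |b i * φ ((s:ℝ) - τ i)|) := by
  refine bdd_restrict_abs (f := fun s => b i * φ (s - τ i)) ?_
  refine ContinuousOn.mul continuousOn_const ?_
  refine hφ.comp (continuousOn_id.sub continuousOn_const) ?_
  intro s hs
  simp only [Set.mem_Iic, id]
  linarith [hs.2]

lemma gronwallBound_le {δ K ε T' T : ℝ} (hδ : 0 ≤ δ) (hε : 0 ≤ ε) (hK : 0 ≤ K)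
    (h1 : 0 ≤ T') (h2 : T' ≤ T) :
    gronwallBound δ K ε T' ≤ (δ + ε * T) * Real.exp (K * T) := by
  have hT : 0 ≤ T := le_trans h1 h2
  have hexp : Real.exp (K * T') ≤ Real.exp (K * T) :=
    Real.exp_le_exp.2 (mul_le_mul_of_nonneg_left h2 hK)
  rcases eq_or_lt_of_le hK with hK0 | hKpos
  · rw [← hK0, gronwallBound_K0]
    have : δ + ε * T' ≤ δ + ε * T := by nlinarith
    calc δ + ε * T' ≤ δ + ε * T := this
    _ ≤ (δ + ε * T) * Real.exp (0 * T) := by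
        rw [zero_mul, Real.exp_zero, mul_one]
  · rw [gronwallBound_of_K_ne_0 (ne_of_gt hKpos)]
    show δ * Real.exp (K * T') + ε / K * (Real.exp (K * T') - 1) ≤ _
    have key : (Real.exp (K * T') - 1) / K ≤ T * Real.exp (K * T) := by
      rw [div_le_iff₀ hKpos]
      have h3 : Real.exp (K * T') - 1 ≤ K * T' * Real.exp (K * T') := by
        have := Real.add_one_le_exp (-(K * T'))
        have hpos := Real.exp_pos (K * T')
        have hm : Real.exp (-(K*T')) * Real.exp (K*T') = 1 := by
          rw [← Real.exp_add]; simp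
        nlinarith
      have h4 : K * T' * Real.exp (K * T') ≤ K * T * Real.exp (K * T) := by
        have hp := Real.exp_pos (K * T')
        have hq : T' * Real.exp (K * T') ≤ T * Real.exp (K * T') := by nlinarith
        have hr : T * Real.exp (K * T') ≤ T * Real.exp (K * T) := by nlinarith
        nlinarith
      nlinarith
    have heq : ε / K * (Real.exp (K * T') - 1) = ε * ((Real.exp (K * T') - 1) / K) := by ring
    rw [heq]
    have h5 : ε * ((Real.exp (K * T') - 1) / K) ≤ ε * (T * Real.exp (K * T)) :=
      mul_le_mul_of_nonneg_left key hε
    have h6 : δ * Real.exp (K * T') ≤ δ * Real.exp (K * T) :=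
      mul_le_mul_of_nonneg_left hexp hδ
    nlinarith

/-- The seminorm-selector used in the boundedness statement. -/
noncomputable def gSel (b τ : ℕ → ℝ) (n : ℕ → ℕ) (φ : ℝ → ℝ) : ℕ × Bool → ℝ :=
  fun q => if q.2 then normSemi φ q.1 else pSemi b τ n φ q.1

lemma gSel_nonneg (b τ : ℕ → ℝ) (n : ℕ → ℕ) (φ : ℝ → ℝ) (q : ℕ × Bool) :
    0 ≤ gSel b τ n φ q := by
  unfold gSel; split
  · exact normSemi_nonneg _ _
  · exact pSemi_nonneg _ _ _ _ _

lemma sup'_gSel_nonneg {b τ : ℕ → ℝ} {n : ℕ → ℕ} {φ : ℝ → ℝ}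
    {Λ : Finset (ℕ × Bool)} (hΛ : Λ.Nonempty) :
    0 ≤ Λ.sup' hΛ (gSel b τ n φ) := by
  obtain ⟨q, hq⟩ := hΛ
  exact le_trans (gSel_nonneg b τ n φ q) (Finset.le_sup' _ hq)

lemma sup'_gSel_subset {b τ : ℕ → ℝ} {n : ℕ → ℕ} {φ : ℝ → ℝ}
    {Λ Λ' : Finset (ℕ × Bool)} (hΛ : Λ.Nonempty) (hΛ' : Λ'.Nonempty) (h : Λ ⊆ Λ') :
    Λ.sup' hΛ (gSel b τ n φ) ≤ Λ'.sup' hΛ' (gSel b τ n φ) :=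
  Finset.sup'_le hΛ _ fun q hq => Finset.le_sup' _ (h hq)

lemma n_mono {τ : ℕ → ℝ} {n : ℕ → ℕ} (hτ0 : 0 < τ 0) (hn : nSpec τ n)
    {k k' : ℕ} (h : k ≤ k') : n k ≤ n k' :=
  (hn k).2 (n k') fun i hi =>
    le_trans (mul_le_mul_of_nonneg_right (by exact_mod_cast h) hτ0.le) ((hn k').1 i hi)

lemma pTerm_shift_le {b τ : ℕ → ℝ} {x φ : ℝ → ℝ} (hxφ : ∀ θ ≤ (0:ℝ), x θ = φ θ)
    (hφ : ContinuousOn φ (Iic 0)) {t : ℝ} (ht : 0 ≤ t) {k K j : ℕ}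
    (hK : t + (k:ℝ) * τ 0 ≤ (K:ℝ) * τ 0) (hj : (K:ℝ) * τ 0 ≤ τ j) :
    pTerm b τ (fun θ => x (t + θ)) k j ≤ pTerm b τ φ K j := by
  refine pTerm_le (pTerm_nonneg _ _ _ _ _) fun s hs => ?_
  show |b j * x (t + (s - τ j))| ≤ _
  have h1 : t + (s - τ j) = (t + s) - τ j := by ring
  have h2 : (t + s) - τ j ≤ 0 := by
    have := hs.2; linarith
  rw [h1, hxφ _ h2]
  exact le_pTerm ⟨by linarith [hs.1], by linarith [hs.2]⟩ (pTerm_bdd_of_contOn hφ hj)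

end Aux

set_option maxHeartbeats 1000000 in
/-- A priori estimate for solutions on `[0, m·τ₀]` by induction on `m`
(method of steps + Grönwall). -/
lemma apriori (a : ℝ) (b τ : ℕ → ℝ) (n : ℕ → ℕ) (hτ : StrictMono τ) (hτpos : ∀ i, 0 < τ i)
    (hn : nSpec τ n) (sol : (ℝ → ℝ) → ℝ → ℝ)
    (hsol : ∀ φ, memF b τ n φ → IsSolution a b τ φ (sol φ)) :
    ∀ m : ℕ, ∃ C : ℝ, 0 ≤ C ∧ ∃ Λ : Finset (ℕ × Bool), ∃ hΛ : Λ.Nonempty,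
      ∀ φ, memF b τ n φ → ∀ s : ℝ, 0 ≤ s → s ≤ (m:ℝ) * τ 0 →
        |sol φ s| ≤ C * Λ.sup' hΛ (gSel b τ n φ) := by
  intro m
  induction m with
  | zero =>
      refine ⟨1, zero_le_one, {(0, true)}, Finset.singleton_nonempty _, ?_⟩
      intro φ hφ s hs0 hs1
      have hs : s = 0 := le_antisymm (by simpa using hs1) hs0
      subst hs
      have hx0 : sol φ 0 = φ 0 := (hsol φ hφ).2.1 0 le_rfl
      rw [hx0, one_mul, Finset.sup'_singleton]
      have h1 : |φ 0| ≤ normSemi φ 0 := le_normSemi ⟨by simp, le_refl 0⟩ hφ.1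
      simpa [gSel] using h1
  | succ m IH =>
      obtain ⟨C, hC, Λ, hΛ, hIH⟩ := IH
      set N := n (m + 1) with hN
      set M : ℕ := ⌈τ N⌉₊ with hM
      set B : ℝ := ∑ i ∈ Finset.range N, |b i| with hB
      have hB0 : 0 ≤ B := Finset.sum_nonneg fun i _ => abs_nonneg _
      set C₂ : ℝ := (1 + (B + 1) * τ 0) * Real.exp (|a| * τ 0) with hC₂
      have hτ0 : (0:ℝ) < τ 0 := hτpos 0
      have hC₂0 : 0 ≤ C₂ := by positivity
      refine ⟨max C (C₂ * (C + 1)), le_max_of_le_left hC,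
        insert (M, true) (insert (m + 1, false) Λ), Finset.insert_nonempty _ _, ?_⟩
      intro φ hφ s hs0 hs1
      have hΛ'ne : (insert (M, true) (insert (m + 1, false) Λ)).Nonempty :=
        Finset.insert_nonempty _ _
      show |sol φ s| ≤ max C (C₂ * (C + 1)) *
        (insert (M, true) (insert (m + 1, false) Λ)).sup' hΛ'ne (gSel b τ n φ)
      set E := (insert (M, true) (insert (m + 1, false) Λ)).sup' hΛ'ne (gSel b τ n φ) with hE
      have hE0 : 0 ≤ E := sup'_gSel_nonneg _
      have hsub : Λ.sup' hΛ (gSel b τ n φ) ≤ E :=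
        sup'_gSel_subset hΛ hΛ'ne (by intro q hq; simp [Finset.mem_insert, hq])
      have hnormM : normSemi φ M ≤ E := by
        have hmem : (M, true) ∈ insert (M, true) (insert (m + 1, false) Λ) := by simp
        exact Finset.le_sup' (s := insert (M, true) (insert (m + 1, false) Λ))
          (gSel b τ n φ) hmem
      have hpsem : pSemi b τ n φ (m + 1) ≤ E := by
        have hmem : ((m : ℕ) + 1, false) ∈ insert (M, true) (insert (m + 1, false) Λ) := by
          simp
        exact Finset.le_sup' (s := insert (M, true) (insert (m + 1, false) Λ))
          (gSel b τ n φ) hmem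
      set E' := (C + 1) * E with hE'
      have hE'0 : 0 ≤ E' := by positivity
      have hEE' : E ≤ E' := by nlinarith
      have hIH' : ∀ u : ℝ, 0 ≤ u → u ≤ (m:ℝ) * τ 0 → |sol φ u| ≤ E' := by
        intro u hu0 hu1
        have h1 := hIH φ hφ u hu0 hu1
        have h2 : C * Λ.sup' hΛ (gSel b τ n φ) ≤ C * E := mul_le_mul_of_nonneg_left hsub hC
        have h3 : C * E ≤ (C + 1) * E := by nlinarith
        linarith
      obtain ⟨hxc, hxφ, hxsum, hxdv, hxrhs⟩ := hsol φ hφ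
      set x := sol φ with hx
      have hcast : ((m + 1 : ℕ) : ℝ) = (m : ℝ) + 1 := by push_cast; ring
      have hm0 : (0:ℝ) ≤ (m:ℝ) * τ 0 := by positivity
      have hbound : ∀ u ∈ Ico ((m:ℝ) * τ 0) (((m:ℝ) + 1) * τ 0),
          |∑' i, b i * x (u - τ i)| ≤ (B + 1) * E' := by
        intro u hu
        have hu0 : (0:ℝ) ≤ u := le_trans hm0 hu.1
        have hS : Summable fun i => b i * x (u - τ i) := hxsum u hu0
        have hSa : Summable fun i => |b i * x (u - τ i)| := hS.abs
        have h1 : |∑' i, b i * x (u - τ i)| ≤ ∑' i, |b i * x (u - τ i)| := by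
          have h0 := norm_tsum_le_tsum_norm (f := fun i => b i * x (u - τ i))
            (by simpa only [Real.norm_eq_abs] using hSa)
          simpa only [Real.norm_eq_abs] using h0
        have hsplit : (∑ i ∈ Finset.range N, |b i * x (u - τ i)|)
            + ∑' i, |b (i + N) * x (u - τ (i + N))| = ∑' i, |b i * x (u - τ i)| :=
          Summable.sum_add_tsum_nat_add N hSa
        have htail : ∑' i, |b (i + N) * x (u - τ (i + N))| ≤ pSemi b τ n φ (m + 1) := by
          have hsum2 : Summable fun i => pTerm b τ φ (m + 1) (N + i) := hφ.2 (m + 1)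
          have hterm : ∀ i, |b (i + N) * x (u - τ (i + N))| ≤ pTerm b τ φ (m + 1) (N + i) := by
            intro i
            have hiN : N ≤ i + N := Nat.le_add_left _ _
            have hτi : ((m + 1 : ℕ):ℝ) * τ 0 ≤ τ (i + N) := (hn (m + 1)).1 _ hiN
            have hτi' : ((m:ℝ) + 1) * τ 0 ≤ τ (i + N) := by rwa [hcast] at hτi
            have hu2 : u - τ (i + N) ≤ 0 := by linarith [hu.2]
            rw [hxφ _ hu2]
            have hmem : u ∈ Icc (0:ℝ) (((m+1:ℕ):ℝ) * τ 0) :=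
              ⟨hu0, by rw [hcast]; linarith [hu.2]⟩
            have h2 := le_pTerm (b := b) (τ := τ) (φ := φ) (k := m + 1) (i := i + N) hmem
              (pTerm_bdd_of_contOn hφ.1 hτi)
            have h3 : pTerm b τ φ (m + 1) (i + N) = pTerm b τ φ (m + 1) (N + i) := by
              rw [Nat.add_comm i N]
            rw [← h3]; exact h2
          have hSa' : Summable fun i => |b (i + N) * x (u - τ (i + N))| :=
            (summable_nat_add_iff N).mpr hSa
          exact Summable.tsum_le_tsum hterm hSa' hsum2
        have hfin : ∑ i ∈ Finset.range N, |b i * x (u - τ i)| ≤ B * E' := by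
          rw [hB, Finset.sum_mul]
          refine Finset.sum_le_sum fun i hi => ?_
          rw [abs_mul]
          refine mul_le_mul_of_nonneg_left ?_ (abs_nonneg _)
          rcases le_or_gt (u - τ i) 0 with hc | hc
          · rw [hxφ _ hc]
            have hτiM : τ i ≤ (M:ℝ) := by
              have h1 : τ i ≤ τ N := hτ.monotone (le_of_lt (Finset.mem_range.1 hi))
              exact le_trans h1 (Nat.le_ceil _)
            have h2 : |φ (u - τ i)| ≤ normSemi φ M :=
              le_normSemi ⟨by linarith, by linarith⟩ hφ.1
            linarith
          · have h2 : u - τ i ≤ (m:ℝ) * τ 0 := by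
              have h3 : τ 0 ≤ τ i := hτ.monotone (Nat.zero_le i)
              linarith [hu.2]
            exact hIH' _ hc.le h2
        calc |∑' i, b i * x (u - τ i)| ≤ ∑' i, |b i * x (u - τ i)| := h1
        _ = (∑ i ∈ Finset.range N, |b i * x (u - τ i)|)
            + ∑' i, |b (i + N) * x (u - τ (i + N))| := hsplit.symm
        _ ≤ B * E' + pSemi b τ n φ (m + 1) := add_le_add hfin htail
        _ ≤ B * E' + E' := by linarith
        _ = (B + 1) * E' := by ring
      rcases le_or_gt s ((m:ℝ) * τ 0) with hsm | hsm
      · have h1 := hIH φ hφ s hs0 hsm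
        calc |sol φ s| ≤ C * Λ.sup' hΛ (gSel b τ n φ) := h1
        _ ≤ C * E := mul_le_mul_of_nonneg_left hsub hC
        _ ≤ max C (C₂ * (C + 1)) * E :=
            mul_le_mul_of_nonneg_right (le_max_left _ _) hE0
      · have hga : |x ((m:ℝ) * τ 0)| ≤ E' := hIH' _ hm0 le_rfl
        have hgron := norm_le_gronwallBound_of_norm_deriv_right_le
          (f := x) (f' := fun u => a * x u + ∑' i, b i * x (u - τ i))
          (δ := E') (K := |a|) (ε := (B + 1) * E')
          (a := (m:ℝ) * τ 0) (b := ((m:ℝ) + 1) * τ 0)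
          hxc.continuousOn
          (fun u hu => (hxdv u (le_trans hm0 hu.1)).mono
            (Set.Ici_subset_Ici.mpr (le_trans hm0 hu.1)))
          (by simpa [Real.norm_eq_abs] using hga)
          (fun u hu => by
            have h1 := hbound u hu
            have h2 : |a * x u + ∑' i, b i * x (u - τ i)|
                ≤ |a| * |x u| + |∑' i, b i * x (u - τ i)| := by
              rw [← abs_mul]; exact abs_add_le _ _
            simp only [Real.norm_eq_abs]
            linarith)
        have hsmem : s ∈ Icc ((m:ℝ) * τ 0) (((m:ℝ)+1) * τ 0) :=
          ⟨hsm.le, by rw [hcast] at hs1; linarith⟩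
        have h3 := hgron s hsmem
        rw [Real.norm_eq_abs] at h3
        have h4 : gronwallBound E' |a| ((B+1)*E') (s - (m:ℝ)*τ 0)
            ≤ (E' + (B+1)*E' * τ 0) * Real.exp (|a| * τ 0) :=
          gronwallBound_le hE'0 (by positivity) (abs_nonneg _)
            (by linarith [hsmem.1]) (by linarith [hsmem.2])
        have h5 : (E' + (B+1)*E' * τ 0) * Real.exp (|a| * τ 0) = C₂ * E' := by
          rw [hC₂]; ring
        have h6 : C₂ * E' = C₂ * (C+1) * E := by rw [hE']; ring
        calc |sol φ s| ≤ gronwallBound E' |a| ((B+1)*E') (s - (m:ℝ)*τ 0) := h3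
        _ ≤ C₂ * (C+1) * E := by rw [← h6, ← h5]; exact h4
        _ ≤ max C (C₂ * (C + 1)) * E :=
            mul_le_mul_of_nonneg_right (le_max_right _ _) hE0

lemma memF_shift (a : ℝ) (b τ : ℕ → ℝ) (n : ℕ → ℕ) (hτpos : ∀ i, 0 < τ i) (hn : nSpec τ n)
    (sol : (ℝ → ℝ) → ℝ → ℝ) (hsol : ∀ φ, memF b τ n φ → IsSolution a b τ φ (sol φ))
    {t : ℝ} (ht : 0 ≤ t) {φ : ℝ → ℝ} (hφ : memF b τ n φ) :
    memF b τ n (Sop sol t φ) := by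
  obtain ⟨hxc, hxφ, -, -, -⟩ := hsol φ hφ
  constructor
  · exact (hxc.comp (continuous_const.add continuous_id)).continuousOn
  · intro k
    set K := k + ⌈t / τ 0⌉₊ with hK
    have hτ0 := hτpos 0
    have hKτ : t + (k:ℝ) * τ 0 ≤ (K:ℝ) * τ 0 := by
      have h1 : t / τ 0 ≤ (⌈t / τ 0⌉₊ : ℝ) := Nat.le_ceil _
      have h2 : t = (t / τ 0) * τ 0 := by field_simp
      have h3 : ((K:ℕ):ℝ) = (k:ℝ) + (⌈t / τ 0⌉₊:ℝ) := by rw [hK]; push_cast; ring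
      nlinarith
    have hnk : n k ≤ n K := n_mono hτ0 hn (Nat.le_add_right _ _)
    set L := n K - n k with hL
    rw [← summable_nat_add_iff L]
    have hcmp : ∀ i, pTerm b τ (Sop sol t φ) k (n k + (i + L)) ≤ pTerm b τ φ K (n K + i) := by
      intro i
      have hj : (K:ℝ) * τ 0 ≤ τ (n K + i) := (hn K).1 _ (Nat.le_add_right _ _)
      have h1 := pTerm_shift_le (b := b) hxφ hφ.1 ht hKτ hj
      have h2 : n k + (i + L) = n K + i := by omega
      rw [h2]
      exact h1
    exact Summable.of_nonneg_of_le (fun i => pTerm_nonneg _ _ _ _ _) hcmp (hφ.2 K)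

lemma sol_shift (a : ℝ) (b τ : ℕ → ℝ) (n : ℕ → ℕ) (hτpos : ∀ i, 0 < τ i) (hn : nSpec τ n)
    (sol : (ℝ → ℝ) → ℝ → ℝ) (hsol : ∀ φ, memF b τ n φ → IsSolution a b τ φ (sol φ))
    (huniq : ∀ φ x, memF b τ n φ → IsSolution a b τ φ x → x = sol φ)
    {s : ℝ} (hs : 0 ≤ s) {φ : ℝ → ℝ} (hφ : memF b τ n φ) :
    (fun r => sol φ (s + r)) = sol (Sop sol s φ) := by
  have hψ : memF b τ n (Sop sol s φ) := memF_shift a b τ n hτpos hn sol hsol hs hφ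
  obtain ⟨hxc, hxφ, hxsum, hxdv, hxrhs⟩ := hsol φ hφ
  set x := sol φ with hx
  refine huniq _ _ hψ ?_
  refine ⟨hxc.comp (continuous_const.add continuous_id), fun θ _ => rfl, ?_, ?_, ?_⟩
  · intro u hu
    have h1 := hxsum (s + u) (by linarith)
    exact h1.congr fun i => by
      rw [show s + u - τ i = s + (u - τ i) by ring]
  · intro u hu
    have hD := hxdv (s + u) (by linarith)
    have hshift : HasDerivWithinAt (fun r : ℝ => s + r) 1 (Ici 0) u :=
      ((hasDerivAt_id u).const_add s).hasDerivWithinAt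
    have hmaps : MapsTo (fun r : ℝ => s + r) (Ici 0) (Ici 0) := by
      intro r hr
      simp only [mem_Ici] at *
      linarith
    have hcomp := HasDerivWithinAt.comp u hD hshift hmaps
    have hval : (a * x (s + u) + ∑' i, b i * x (s + u - τ i)) * 1
        = a * x (s + u) + ∑' i, b i * x (s + (u - τ i)) := by
      rw [mul_one]
      congr 1
      exact tsum_congr fun i => by rw [show s + u - τ i = s + (u - τ i) by ring]
    rw [hval] at hcomp
    exact hcomp
  · have h1 : ContinuousOn ((fun v => a * x v + ∑' i, b i * x (v - τ i))
        ∘ (fun u : ℝ => s + u)) (Ici 0) := by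
      refine hxrhs.comp (continuous_const.add continuous_id).continuousOn ?_
      intro u hu
      simp only [mem_Ici] at *
      linarith
    refine h1.congr ?_
    intro u hu
    show a * x (s + u) + ∑' i, b i * x (s + (u - τ i))
        = a * x (s + u) + ∑' i, b i * x (s + u - τ i)
    congr 1
    exact tsum_congr fun i => by rw [show s + (u - τ i) = s + u - τ i by ring]

lemma pTerm_sub_le {b τ : ℕ → ℝ} {x1 x2 : ℝ → ℝ} (h1 : Continuous x1) (h2 : Continuous x2)
    (k j : ℕ) : pTerm b τ (fun θ => x1 θ - x2 θ) k j ≤ pTerm b τ x1 k j + pTerm b τ x2 k j := by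
  refine pTerm_le (add_nonneg (pTerm_nonneg _ _ _ _ _) (pTerm_nonneg _ _ _ _ _)) fun s hs => ?_
  show |b j * (x1 (s - τ j) - x2 (s - τ j))| ≤ _
  have e : b j * (x1 (s - τ j) - x2 (s - τ j))
      = b j * x1 (s - τ j) + -(b j * x2 (s - τ j)) := by ring
  rw [e]
  refine le_trans (abs_add_le _ _) ?_
  rw [abs_neg]
  exact add_le_add (le_pTerm hs (pTerm_bdd_of_cont h1 _ _))
    (le_pTerm hs (pTerm_bdd_of_cont h2 _ _))

lemma pTerm_addmul_le {b τ : ℕ → ℝ} {φ ψ : ℝ → ℝ} (hφ : ContinuousOn φ (Iic 0))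
    (hψ : ContinuousOn ψ (Iic 0)) (c : ℝ) {k j : ℕ} (hj : (k:ℝ) * τ 0 ≤ τ j) :
    pTerm b τ (fun θ => φ θ + c * ψ θ) k j ≤ pTerm b τ φ k j + |c| * pTerm b τ ψ k j := by
  refine pTerm_le (add_nonneg (pTerm_nonneg _ _ _ _ _)
    (mul_nonneg (abs_nonneg _) (pTerm_nonneg _ _ _ _ _))) fun s hs => ?_
  show |b j * (φ (s - τ j) + c * ψ (s - τ j))| ≤ _
  have e : b j * (φ (s - τ j) + c * ψ (s - τ j))
      = b j * φ (s - τ j) + c * (b j * ψ (s - τ j)) := by ring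
  rw [e]
  refine le_trans (abs_add_le _ _) ?_
  rw [abs_mul c]
  exact add_le_add (le_pTerm hs (pTerm_bdd_of_contOn hφ hj))
    (mul_le_mul_of_nonneg_left (le_pTerm hs (pTerm_bdd_of_contOn hψ hj)) (abs_nonneg _))

lemma memF_addmul (b τ : ℕ → ℝ) (n : ℕ → ℕ) (hn : nSpec τ n) {φ ψ : ℝ → ℝ}
    (hφ : memF b τ n φ) (hψ : memF b τ n ψ) (c : ℝ) :
    memF b τ n (fun θ => φ θ + c * ψ θ) := by
  refine ⟨hφ.1.add (continuousOn_const.mul hψ.1), fun k => ?_⟩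
  refine Summable.of_nonneg_of_le (fun i => pTerm_nonneg _ _ _ _ _) (fun i => ?_)
    ((hφ.2 k).add ((hψ.2 k).mul_left |c|))
  exact pTerm_addmul_le hφ.1 hψ.1 c ((hn k).1 _ (Nat.le_add_right _ _))

lemma sol_addmul (a : ℝ) (b τ : ℕ → ℝ) (n : ℕ → ℕ) (hn : nSpec τ n)
    (sol : (ℝ → ℝ) → ℝ → ℝ) (hsol : ∀ φ, memF b τ n φ → IsSolution a b τ φ (sol φ))
    (huniq : ∀ φ x, memF b τ n φ → IsSolution a b τ φ x → x = sol φ)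
    {φ ψ : ℝ → ℝ} (hφ : memF b τ n φ) (hψ : memF b τ n ψ) (c : ℝ) :
    (fun r => sol φ r + c * sol ψ r) = sol (fun θ => φ θ + c * ψ θ) := by
  obtain ⟨h1c, h1φ, h1sum, h1dv, h1rhs⟩ := hsol φ hφ
  obtain ⟨h2c, h2φ, h2sum, h2dv, h2rhs⟩ := hsol ψ hψ
  refine huniq _ _ (memF_addmul b τ n hn hφ hψ c) ?_
  set x1 := sol φ with hx1
  set x2 := sol ψ with hx2
  have hsum3 : ∀ u ≥ (0:ℝ), Summable fun i => b i * (x1 (u - τ i) + c * x2 (u - τ i)) := by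
    intro u hu
    exact ((h1sum u hu).add ((h2sum u hu).mul_left c)).congr fun i => by ring
  have htsum3 : ∀ u ≥ (0:ℝ), ∑' i, b i * (x1 (u - τ i) + c * x2 (u - τ i))
      = (∑' i, b i * x1 (u - τ i)) + c * ∑' i, b i * x2 (u - τ i) := by
    intro u hu
    rw [← tsum_mul_left, ← Summable.tsum_add (h1sum u hu) ((h2sum u hu).mul_left c)]
    exact tsum_congr fun i => by ring
  refine ⟨h1c.add (continuous_const.mul h2c),
    fun θ hθ => by simp only [h1φ θ hθ, h2φ θ hθ], hsum3, ?_, ?_⟩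
  · intro u hu
    have hD := (h1dv u hu).add ((h2dv u hu).const_mul c)
    have hval : (a * x1 u + ∑' i, b i * x1 (u - τ i))
        + c * (a * x2 u + ∑' i, b i * x2 (u - τ i))
        = a * (x1 u + c * x2 u) + ∑' i, b i * (x1 (u - τ i) + c * x2 (u - τ i)) := by
      rw [htsum3 u hu]; ring
    rw [hval] at hD
    exact hD
  · have hcont := h1rhs.add ((continuousOn_const (c := c)).mul h2rhs)
    refine ContinuousOn.congr hcont ?_
    intro u hu
    show a * (x1 u + c * x2 u) + ∑' i, b i * (x1 (u - τ i) + c * x2 (u - τ i))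
      = (a * x1 u + ∑' i, b i * x1 (u - τ i)) + c * (a * x2 u + ∑' i, b i * x2 (u - τ i))
    rw [htsum3 u hu]; ring

set_option maxHeartbeats 1000000 in
lemma bounded_aux (a : ℝ) (b τ : ℕ → ℝ) (n : ℕ → ℕ) (hτ : StrictMono τ) (hτpos : ∀ i, 0 < τ i)
    (hn : nSpec τ n) (sol : (ℝ → ℝ) → ℝ → ℝ)
    (hsol : ∀ φ, memF b τ n φ → IsSolution a b τ φ (sol φ))
    {t : ℝ} (ht : 0 ≤ t) (k : ℕ) :
    ∃ C : ℝ, 0 ≤ C ∧ ∃ (Λ : Finset (ℕ × Bool)) (hΛ : Λ.Nonempty),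
      ∀ φ, memF b τ n φ →
        normSemi (Sop sol t φ) k ≤ C * Λ.sup' hΛ (gSel b τ n φ) ∧
        pSemi b τ n (Sop sol t φ) k ≤ C * Λ.sup' hΛ (gSel b τ n φ) := by
  have hτ0 : (0:ℝ) < τ 0 := hτpos 0
  have hk0 : (0:ℝ) ≤ (k:ℝ) := Nat.cast_nonneg k
  set m := ⌈t / τ 0⌉₊ + k with hm
  obtain ⟨C, hC, Λ, hΛ, hest⟩ := apriori a b τ n hτ hτpos hn sol hsol m
  have htm : t + (k:ℝ) * τ 0 ≤ (m:ℝ) * τ 0 := by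
    have h1 : t / τ 0 ≤ (⌈t / τ 0⌉₊ : ℝ) := Nat.le_ceil _
    have h2 : t = (t / τ 0) * τ 0 := by field_simp
    have h3 : ((m:ℕ):ℝ) = (⌈t / τ 0⌉₊:ℝ) + (k:ℝ) := by rw [hm]; push_cast; ring
    nlinarith
  have hnk : n k ≤ n m := n_mono hτ0 hn (Nat.le_add_left _ _)
  set L := n m - n k with hL
  set M' : ℕ := ⌈τ (n m)⌉₊ with hM'
  set B' : ℝ := ∑ i ∈ Finset.range L, |b (n k + i)| with hB'
  have hB'0 : 0 ≤ B' := Finset.sum_nonneg fun _ _ => abs_nonneg _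
  refine ⟨(B' + 1) * (C + 1), by positivity,
    insert (k, true) (insert (m, false) (insert (M', true) Λ)),
    Finset.insert_nonempty _ _, ?_⟩
  intro φ hφ
  have hΛne : (insert (k, true) (insert (m, false) (insert (M', true) Λ))).Nonempty :=
    Finset.insert_nonempty _ _
  set E := (insert (k, true) (insert (m, false) (insert (M', true) Λ))).sup' hΛne
    (gSel b τ n φ) with hE
  have hE0 : 0 ≤ E := sup'_gSel_nonneg _
  have hsub : Λ.sup' hΛ (gSel b τ n φ) ≤ E :=
    sup'_gSel_subset hΛ hΛne (by intro q hq; simp [Finset.mem_insert, hq])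
  have hnk' : normSemi φ k ≤ E := by
    have hmem : ((k:ℕ), true) ∈ insert (k, true) (insert (m, false) (insert (M', true) Λ)) := by
      simp
    exact Finset.le_sup' (gSel b τ n φ) hmem
  have hpm : pSemi b τ n φ m ≤ E := by
    have hmem : ((m:ℕ), false) ∈ insert (k, true) (insert (m, false) (insert (M', true) Λ)) := by
      simp
    exact Finset.le_sup' (gSel b τ n φ) hmem
  have hnM' : normSemi φ M' ≤ E := by
    have hmem : ((M':ℕ), true) ∈ insert (k, true) (insert (m, false) (insert (M', true) Λ)) := by
      simp
    exact Finset.le_sup' (gSel b τ n φ) hmem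
  obtain ⟨hxc, hxφ, -, -, -⟩ := hsol φ hφ
  set x := sol φ with hx
  have hbig : ∀ u : ℝ, 0 ≤ u → u ≤ t + (k:ℝ) * τ 0 → |x u| ≤ C * E := fun u h1 h2 =>
    le_trans (hest φ hφ u h1 (le_trans h2 htm)) (mul_le_mul_of_nonneg_left hsub hC)
  constructor
  · refine normSemi_le (by positivity) ?_
    intro θ hθ
    show |x (t + θ)| ≤ (B' + 1) * (C + 1) * E
    rcases le_or_gt (t + θ) 0 with hc | hc
    · rw [hxφ _ hc]
      have h1 : |φ (t + θ)| ≤ normSemi φ k :=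
        le_normSemi ⟨by linarith [hθ.1], hc⟩ hφ.1
      nlinarith [mul_nonneg hB'0 hC, mul_nonneg (mul_nonneg hB'0 hC) hE0, mul_nonneg hB'0 hE0, mul_nonneg hC hE0]
    · have h1 := hbig (t + θ) hc.le (by nlinarith [hθ.2])
      nlinarith [mul_nonneg hB'0 hC, mul_nonneg (mul_nonneg hB'0 hC) hE0, mul_nonneg hB'0 hE0, mul_nonneg hC hE0]
  · have hsummS : Summable fun i => pTerm b τ (Sop sol t φ) k (n k + i) :=
      (memF_shift a b τ n hτpos hn sol hsol ht hφ).2 k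
    have hsplit := (Summable.sum_add_tsum_nat_add L hsummS).symm
    have htail : ∑' i, pTerm b τ (Sop sol t φ) k (n k + (i + L)) ≤ E := by
      have hcmp : ∀ i, pTerm b τ (Sop sol t φ) k (n k + (i + L))
          ≤ pTerm b τ φ m (n m + i) := by
        intro i
        have hj : (m:ℝ) * τ 0 ≤ τ (n m + i) := (hn m).1 _ (Nat.le_add_right _ _)
        have h1 := pTerm_shift_le (b := b) hxφ hφ.1 ht htm hj
        have h2 : n k + (i + L) = n m + i := by omega
        rw [h2]; exact h1
      exact le_trans (Summable.tsum_le_tsum hcmp ((summable_nat_add_iff L).mpr hsummS) (hφ.2 m)) hpm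
    have hfin : ∑ i ∈ Finset.range L, pTerm b τ (Sop sol t φ) k (n k + i)
        ≤ B' * ((C + 1) * E) := by
      rw [hB', Finset.sum_mul]
      refine Finset.sum_le_sum fun i hi => ?_
      refine pTerm_le (by positivity) fun s hs => ?_
      show |b (n k + i) * x (t + (s - τ (n k + i)))| ≤ _
      rw [abs_mul]
      refine mul_le_mul_of_nonneg_left ?_ (abs_nonneg _)
      have hjm : n k + i < n m := by
        have := Finset.mem_range.1 hi; omega
      have hτj : τ (n k + i) ≤ (M':ℝ) :=
        le_trans (hτ.monotone hjm.le) (Nat.le_ceil _)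
      have hτjpos := hτpos (n k + i)
      rcases le_or_gt (t + (s - τ (n k + i))) 0 with hc | hc
      · rw [hxφ _ hc]
        have h1 : |φ (t + (s - τ (n k + i)))| ≤ normSemi φ M' :=
          le_normSemi ⟨by linarith [hs.1], hc⟩ hφ.1
        nlinarith [hE0, hC]
      · have h1 := hbig _ hc.le (by nlinarith [hs.2])
        nlinarith [hE0, hC]
    calc pSemi b τ n (Sop sol t φ) k
        = (∑ i ∈ Finset.range L, pTerm b τ (Sop sol t φ) k (n k + i))
          + ∑' i, pTerm b τ (Sop sol t φ) k (n k + (i + L)) := hsplit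
    _ ≤ B' * ((C + 1) * E) + E := add_le_add hfin htail
    _ ≤ (B' + 1) * (C + 1) * E := by nlinarith [mul_nonneg hB'0 hC, mul_nonneg (mul_nonneg hB'0 hC) hE0, mul_nonneg hB'0 hE0, mul_nonneg hC hE0]

lemma strong_cont_norm (a : ℝ) (b τ : ℕ → ℝ) (n : ℕ → ℕ)
    (sol : (ℝ → ℝ) → ℝ → ℝ) (hsol : ∀ φ, memF b τ n φ → IsSolution a b τ φ (sol φ))
    {φ : ℝ → ℝ} (hφ : memF b τ n φ) (t₀ : ℝ) (k : ℕ) :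
    Tendsto (fun t => normSemi (fun θ => Sop sol t φ θ - Sop sol t₀ φ θ) k)
      (𝓝[Set.Ici (0:ℝ)] t₀) (𝓝 0) := by
  obtain ⟨hxc, -, -, -, -⟩ := hsol φ hφ
  set x := sol φ with hx
  refine Metric.tendsto_nhds.mpr fun ε hε => ?_
  have hUC := (isCompact_Icc (a := t₀ - ((k:ℝ) + 1))
    (b := t₀ + 1)).uniformContinuousOn_of_continuous hxc.continuousOn
  rw [Metric.uniformContinuousOn_iff] at hUC
  obtain ⟨δ, hδ, hδ'⟩ := hUC (ε / 2) (by positivity)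
  have hball : Metric.ball t₀ (min δ 1) ∈ 𝓝[Set.Ici (0:ℝ)] t₀ :=
    nhdsWithin_le_nhds (Metric.ball_mem_nhds _ (lt_min hδ one_pos))
  filter_upwards [hball] with t htb
  rw [Metric.mem_ball, Real.dist_eq] at htb
  have htδ : |t - t₀| < δ := lt_of_lt_of_le htb (min_le_left _ _)
  have ht1' := abs_lt.mp (lt_of_lt_of_le htb (min_le_right _ _))
  rw [Real.dist_eq, sub_zero, abs_of_nonneg (normSemi_nonneg _ _)]
  refine lt_of_le_of_lt (normSemi_le (le_of_lt (half_pos hε)) ?_) (half_lt_self hε)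
  intro θ hθ
  show |x (t + θ) - x (t₀ + θ)| ≤ ε / 2
  have hk0 : (0:ℝ) ≤ (k:ℝ) := Nat.cast_nonneg k
  have hm1 : t + θ ∈ Icc (t₀ - ((k:ℝ) + 1)) (t₀ + 1) :=
    ⟨by linarith [hθ.1, ht1'.1], by linarith [hθ.2, ht1'.2]⟩
  have hm2 : t₀ + θ ∈ Icc (t₀ - ((k:ℝ) + 1)) (t₀ + 1) :=
    ⟨by linarith [hθ.1], by linarith [hθ.2]⟩
  have hd := hδ' _ hm1 _ hm2 (by
    rw [Real.dist_eq]
    simpa [show t + θ - (t₀ + θ) = t - t₀ by ring] using htδ)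
  rw [Real.dist_eq] at hd
  exact le_of_lt hd

set_option maxHeartbeats 1000000 in
lemma strong_cont_p (a : ℝ) (b τ : ℕ → ℝ) (n : ℕ → ℕ) (hτ : StrictMono τ)
    (hτpos : ∀ i, 0 < τ i) (hn : nSpec τ n) (sol : (ℝ → ℝ) → ℝ → ℝ)
    (hsol : ∀ φ, memF b τ n φ → IsSolution a b τ φ (sol φ))
    {φ : ℝ → ℝ} (hφ : memF b τ n φ) {t₀ : ℝ} (ht₀ : 0 ≤ t₀) (k : ℕ) :
    Tendsto (fun t => pSemi b τ n (fun θ => Sop sol t φ θ - Sop sol t₀ φ θ) k)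
      (𝓝[Set.Ici (0:ℝ)] t₀) (𝓝 0) := by
  obtain ⟨hxc, hxφ, -, -, -⟩ := hsol φ hφ
  set x := sol φ with hx
  have hτ0 : (0:ℝ) < τ 0 := hτpos 0
  have hk0 : (0:ℝ) ≤ (k:ℝ) := Nat.cast_nonneg k
  refine Metric.tendsto_nhds.mpr fun ε hε => ?_
  set K := k + ⌈(t₀ + 1) / τ 0⌉₊ with hK
  have hKτ : t₀ + 1 + (k:ℝ) * τ 0 ≤ (K:ℝ) * τ 0 := by
    have h1 : (t₀+1) / τ 0 ≤ (⌈(t₀+1) / τ 0⌉₊ : ℝ) := Nat.le_ceil _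
    have h2 : t₀ + 1 = ((t₀+1) / τ 0) * τ 0 := by field_simp
    have h3 : ((K:ℕ):ℝ) = (k:ℝ) + (⌈(t₀+1) / τ 0⌉₊:ℝ) := by rw [hK]; push_cast; ring
    nlinarith
  have hnkK : n k ≤ n K := n_mono hτ0 hn (Nat.le_add_right _ _)
  have htails := tendsto_sum_nat_add (fun i => pTerm b τ φ K (n K + i))
  obtain ⟨J, hJ⟩ :=
    (htails.eventually (gt_mem_nhds (show (0:ℝ) < ε/8 by positivity))).exists
  set L := n K + J - n k with hL
  have hLk : n k + L = n K + J := by omega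
  set S := ∑ i ∈ Finset.range L, |b (n k + i)| with hS
  have hS0 : 0 ≤ S := Finset.sum_nonneg fun _ _ => abs_nonneg _
  set ε₂ := ε / (4 * (S + 1)) with hε₂
  have hε₂0 : 0 < ε₂ := by positivity
  set A := t₀ - 1 - τ (n k + L) with hA
  set B2 := t₀ + 1 + (k:ℝ) * τ 0 with hB2
  have hUC := (isCompact_Icc (a := A) (b := B2)).uniformContinuousOn_of_continuous
    hxc.continuousOn
  rw [Metric.uniformContinuousOn_iff] at hUC
  obtain ⟨δ, hδ, hδ'⟩ := hUC ε₂ hε₂0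
  have hball : Metric.ball t₀ (min δ 1) ∈ 𝓝[Set.Ici (0:ℝ)] t₀ :=
    nhdsWithin_le_nhds (Metric.ball_mem_nhds _ (lt_min hδ one_pos))
  filter_upwards [hball, self_mem_nhdsWithin] with t htb htIci
  have ht : (0:ℝ) ≤ t := htIci
  rw [Metric.mem_ball, Real.dist_eq] at htb
  have htδ : |t - t₀| < δ := lt_of_lt_of_le htb (min_le_left _ _)
  have ht1' := abs_lt.mp (lt_of_lt_of_le htb (min_le_right _ _))
  show dist (pSemi b τ n (fun θ => x (t + θ) - x (t₀ + θ)) k) 0 < ε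
  rw [Real.dist_eq, sub_zero, abs_of_nonneg (pSemi_nonneg _ _ _ _ _)]
  set ψ := fun θ => x (t + θ) - x (t₀ + θ) with hψ
  have hsum1 : Summable fun i => pTerm b τ (Sop sol t φ) k (n k + i) :=
    (memF_shift a b τ n hτpos hn sol hsol ht hφ).2 k
  have hsum2 : Summable fun i => pTerm b τ (Sop sol t₀ φ) k (n k + i) :=
    (memF_shift a b τ n hτpos hn sol hsol ht₀ hφ).2 k
  have hψsub : ∀ j, pTerm b τ ψ k j
      ≤ pTerm b τ (Sop sol t φ) k j + pTerm b τ (Sop sol t₀ φ) k j := fun j =>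
    pTerm_sub_le (hxc.comp (continuous_const.add continuous_id))
      (hxc.comp (continuous_const.add continuous_id)) k j
  have hsumψ : Summable fun i => pTerm b τ ψ k (n k + i) :=
    Summable.of_nonneg_of_le (fun i => pTerm_nonneg _ _ _ _ _) (fun i => hψsub _)
      (hsum1.add hsum2)
  have hsplit := (Summable.sum_add_tsum_nat_add L hsumψ).symm
  have htail : ∑' i, pTerm b τ ψ k (n k + (i + L)) ≤ ε/4 := by
    have hcmp : ∀ i, pTerm b τ ψ k (n k + (i + L))
        ≤ 2 * pTerm b τ φ K (n K + (i + J)) := by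
      intro i
      have hidx : n k + (i + L) = n K + (i + J) := by omega
      rw [hidx]
      have hjK : (K:ℝ) * τ 0 ≤ τ (n K + (i + J)) := (hn K).1 _ (by omega)
      refine pTerm_le (mul_nonneg (by norm_num) (pTerm_nonneg _ _ _ _ _)) fun s hs => ?_
      show |b (n K + (i + J)) * (x (t + (s - τ (n K + (i + J))))
        - x (t₀ + (s - τ (n K + (i + J)))))| ≤ _
      set j := n K + (i + J) with hj
      have harg1 : t + (s - τ j) = (t + s) - τ j := by ring
      have harg2 : t₀ + (s - τ j) = (t₀ + s) - τ j := by ring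
      have hc1 : (t + s) - τ j ≤ 0 := by linarith [hs.2, ht1'.2]
      have hc2 : (t₀ + s) - τ j ≤ 0 := by linarith [hs.2]
      rw [harg1, harg2, hxφ _ hc1, hxφ _ hc2]
      have e : b j * (φ ((t+s) - τ j) - φ ((t₀+s) - τ j))
          = b j * φ ((t+s) - τ j) + -(b j * φ ((t₀+s) - τ j)) := by ring
      rw [e]
      refine le_trans (abs_add_le _ _) ?_
      rw [abs_neg]
      have hb1 := le_pTerm (b := b) (τ := τ) (φ := φ) (k := K) (i := j)
        (s := t + s) ⟨by linarith [hs.1], by linarith [hs.2, ht1'.2]⟩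
        (pTerm_bdd_of_contOn hφ.1 hjK)
      have hb2 := le_pTerm (b := b) (τ := τ) (φ := φ) (k := K) (i := j)
        (s := t₀ + s) ⟨by linarith [hs.1], by linarith [hs.2]⟩
        (pTerm_bdd_of_contOn hφ.1 hjK)
      linarith
    have hsψ' : Summable fun i => pTerm b τ ψ k (n k + (i + L)) :=
      (summable_nat_add_iff L).mpr hsumψ
    have hsφ' : Summable fun i => pTerm b τ φ K (n K + (i + J)) :=
      (summable_nat_add_iff J).mpr (hφ.2 K)
    have h1 := Summable.tsum_le_tsum hcmp hsψ' (hsφ'.mul_left 2)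
    rw [tsum_mul_left] at h1
    have h2 : ∑' i, pTerm b τ φ K (n K + (i + J)) < ε/8 := hJ
    have h3 : (0:ℝ) ≤ ∑' i, pTerm b τ φ K (n K + (i + J)) :=
      tsum_nonneg fun _ => pTerm_nonneg _ _ _ _ _
    linarith
  have hfin : ∑ i ∈ Finset.range L, pTerm b τ ψ k (n k + i) ≤ S * ε₂ := by
    rw [hS, Finset.sum_mul]
    refine Finset.sum_le_sum fun i hi => ?_
    have hjL : n k + i ≤ n k + L := by
      have := Finset.mem_range.1 hi; omega
    have hτjL : τ (n k + i) ≤ τ (n k + L) := hτ.monotone hjL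
    have hτjpos := hτpos (n k + i)
    refine pTerm_le (by positivity) fun s hs => ?_
    show |b (n k + i) * (x (t + (s - τ (n k + i))) - x (t₀ + (s - τ (n k + i))))| ≤ _
    rw [abs_mul]
    refine mul_le_mul_of_nonneg_left ?_ (abs_nonneg _)
    have hm1 : t + (s - τ (n k + i)) ∈ Icc A B2 :=
      ⟨by linarith [hs.1, ht1'.1], by linarith [hs.2, ht1'.2]⟩
    have hm2 : t₀ + (s - τ (n k + i)) ∈ Icc A B2 :=
      ⟨by linarith [hs.1], by linarith [hs.2]⟩
    have hd := hδ' _ hm1 _ hm2 (by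
      rw [Real.dist_eq]
      simpa [show t + (s - τ (n k + i)) - (t₀ + (s - τ (n k + i))) = t - t₀ by ring] using htδ)
    rw [Real.dist_eq] at hd
    exact le_of_lt hd
  have hfinal : pSemi b τ n ψ k
      = (∑ i ∈ Finset.range L, pTerm b τ ψ k (n k + i))
        + ∑' i, pTerm b τ ψ k (n k + (i + L)) := hsplit
  rw [hfinal]
  have hSε : S * ε₂ ≤ ε/4 := by
    have h1 : S * ε₂ ≤ (S + 1) * ε₂ := by nlinarith
    have h2 : (S + 1) * ε₂ = ε/4 := by
      rw [hε₂]; field_simp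
    linarith
  linarith
/-- the family S_t, t ≥ 0, built from the unique solutions x_φ of
the delay equation, is a strongly continuous semigroup of continuous (bounded)
linear operators on the Fréchet space F: S_0 = I, S_{t+s} = S_t ∘ S_s, S_t maps
F into F linearly, each S_t is bounded with respect to the seminorms, and
t ↦ S_t φ is continuous from [0,∞) into F for each φ ∈ F. -/
theorem solution_semigroup (a : ℝ) (b τ : ℕ → ℝ) (n : ℕ → ℕ)
    (hτ : StrictMono τ) (hτpos : ∀ i, 0 < τ i)
    (hτtop : Tendsto τ atTop atTop) (hn : nSpec τ n)
    (sol : (ℝ → ℝ) → ℝ → ℝ)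
    (hsol : ∀ φ, memF b τ n φ → IsSolution a b τ φ (sol φ))
    (huniq : ∀ φ x, memF b τ n φ → IsSolution a b τ φ x → x = sol φ) :
    -- S_0 = I on F
    (∀ φ, memF b τ n φ → ∀ θ ≤ (0:ℝ), Sop sol 0 φ θ = φ θ) ∧
    -- S_t maps F into F
    (∀ t ≥ (0:ℝ), ∀ φ, memF b τ n φ → memF b τ n (Sop sol t φ)) ∧
    -- semigroup property S_{t+s} = S_t S_s
    (∀ t ≥ (0:ℝ), ∀ s ≥ (0:ℝ), ∀ φ, memF b τ n φ → ∀ θ ≤ (0:ℝ),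
      Sop sol (t + s) φ θ = Sop sol t (Sop sol s φ) θ) ∧
    -- linearity of S_t on F
    (∀ t ≥ (0:ℝ), ∀ φ ψ, memF b τ n φ → memF b τ n ψ → ∀ c : ℝ, ∀ θ ≤ (0:ℝ),
      Sop sol t (fun θ' => φ θ' + c * ψ θ') θ = Sop sol t φ θ + c * Sop sol t ψ θ) ∧
    -- boundedness (hence continuity) of S_t: each seminorm of S_t φ is bounded by
    -- a constant times the max of finitely many seminorms of φ
    (∀ t ≥ (0:ℝ), ∀ k : ℕ, ∃ C : ℝ, 0 ≤ C ∧ ∃ (Λ : Finset (ℕ × Bool)) (hΛ : Λ.Nonempty),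
      ∀ φ, memF b τ n φ →
        normSemi (Sop sol t φ) k ≤
          C * Λ.sup' hΛ (fun q => if q.2 then normSemi φ q.1 else pSemi b τ n φ q.1) ∧
        pSemi b τ n (Sop sol t φ) k ≤
          C * Λ.sup' hΛ (fun q => if q.2 then normSemi φ q.1 else pSemi b τ n φ q.1)) ∧
    -- strong continuity of t ↦ S_t φ
    (∀ φ, memF b τ n φ → ∀ t₀ ≥ (0:ℝ), ∀ k : ℕ,
      Tendsto (fun t => normSemi (fun θ => Sop sol t φ θ - Sop sol t₀ φ θ) k)
        (𝓝[Set.Ici (0:ℝ)] t₀) (nhds 0) ∧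
      Tendsto (fun t => pSemi b τ n (fun θ => Sop sol t φ θ - Sop sol t₀ φ θ) k)
        (𝓝[Set.Ici (0:ℝ)] t₀) (nhds 0)) := by
  have hτ0 : (0:ℝ) < τ 0 := hτpos 0
  refine ⟨?_, ?_, ?_, ?_, ?_, ?_⟩
  · -- S_0 = I
    intro φ hφ θ hθ
    show sol φ (0 + θ) = φ θ
    rw [zero_add]
    exact (hsol φ hφ).2.1 θ hθ
  · -- S_t maps F into F
    intro t ht φ hφ
    exact memF_shift a b τ n hτpos hn sol hsol ht hφ
  · -- semigroup property
    intro t ht s hs φ hφ θ hθ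
    have h := sol_shift a b τ n hτpos hn sol hsol huniq hs hφ
    show sol φ (t + s + θ) = sol (Sop sol s φ) (t + θ)
    rw [← h]
    show sol φ (t + s + θ) = sol φ (s + (t + θ))
    congr 1
    ring
  · -- linearity
    intro t ht φ ψ hφ hψ c θ hθ
    have h := sol_addmul a b τ n hn sol hsol huniq hφ hψ c
    show sol (fun θ' => φ θ' + c * ψ θ') (t + θ) = sol φ (t + θ) + c * sol ψ (t + θ)
    rw [← h]
  · -- boundedness
    intro t ht k
    obtain ⟨C, hC, Λ, hΛ, h⟩ := bounded_aux a b τ n hτ hτpos hn sol hsol ht k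
    exact ⟨C, hC, Λ, hΛ, h⟩
  · -- strong continuity
    intro φ hφ t₀ ht₀ k
    exact ⟨strong_cont_norm a b τ n sol hsol hφ t₀ k,
      strong_cont_p a b τ n hτ hτpos hn sol hsol hφ ht₀ k⟩
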